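/- Let a > 0, a₁ > 0, c > 0, b ≥ 2, R > 0. Let h : ℂ → ℂ satisfy |h(u)| ≤ c·|u|^b for all u, and let f : ℝ → ℂ satisfy |f(t)| ≤ c·e^{-a₁·t} for all t ≥ 0. Suppose c·(1 + 1/(a·R^b))·R ≤ 1. Then for every continuous u : [0,∞) → ℂ with sup_{t≥0} |u(t)| ≤ 1/R, the function (Tu)(t) := ∫₀ᵗ e^{-a(t-s)} h(u(s)) ds + f(t) satisfies sup_{t≥0} |(Tu)(t)| ≤ 1/R. -/

import Mathlib

set_option maxHeartbeats 1000000

open Real Set intervalIntegral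

/-- Invariance of the ball `B_R` (inequality (e23)): if `c(1 + 1/(aR^b))R ≤ 1` and
`sup_{t ≥ 0} |u(t)| ≤ 1/R`, then `sup_{t ≥ 0} |(Tu)(t)| ≤ 1/R`, where
`(Tu)(t) = ∫₀ᵗ e^{-a(t-s)} h(u(s)) ds + f(t)`. -/
theorem ball_invariance
    (a a₁ c b R : ℝ) (ha : 0 < a) (ha₁ : 0 < a₁) (hc : 0 < c) (hb : 2 ≤ b) (hR : 0 < R)
    (h : ℂ → ℂ) (hh : ∀ z : ℂ, ‖h z‖ ≤ c * ‖z‖ ^ b)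
    (f : ℝ → ℂ) (hf : ∀ t ≥ (0:ℝ), ‖f t‖ ≤ c * Real.exp (-a₁ * t))
    (hsmall : c * (1 + 1 / (a * R ^ b)) * R ≤ 1)
    (u : ℝ → ℂ) (hu_cont : ContinuousOn u (Ici 0))
    (hu_bd : ∀ t ≥ (0:ℝ), ‖u t‖ ≤ 1 / R) :
    ∀ t ≥ (0:ℝ),
      ‖(∫ s in (0:ℝ)..t, Real.exp (-(a * (t - s))) • h (u s)) + f t‖ ≤ 1 / R := by
  intro t ht
  have hRb : (0:ℝ) < R ^ b := Real.rpow_pos_of_pos hR b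
  have haRb : (0:ℝ) < a * R ^ b := mul_pos ha hRb
  have hinv : (0:ℝ) < 1 / (a * R ^ b) := by positivity
  have hcle : c ≤ 1 / R := by
    rw [le_div_iff₀ hR]
    nlinarith
  have hft : ‖f t‖ ≤ c := by
    refine (hf t ht).trans ?_
    have : Real.exp (-a₁ * t) ≤ 1 := Real.exp_le_one_iff.mpr (by nlinarith)
    nlinarith
  by_cases hint : IntervalIntegrable (fun s => Real.exp (-(a * (t - s))) • h (u s))
      MeasureTheory.volume 0 t
  · have hb0 : (0:ℝ) ≤ b := by linarith
    have hKnn : (0:ℝ) ≤ c / R ^ b := by positivity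
    -- pointwise bound
    have hbound : ∀ s ∈ Set.uIoc (0:ℝ) t,
        ‖Real.exp (-(a * (t - s))) • h (u s)‖ ≤ Real.exp (-(a * (t - s))) * (c / R ^ b) := by
      intro s hs
      rw [Set.uIoc_of_le ht] at hs
      have hs0 : (0:ℝ) ≤ s := hs.1.le
      rw [norm_smul, Real.norm_eq_abs, abs_of_pos (Real.exp_pos _)]
      refine mul_le_mul_of_nonneg_left ((hh _).trans ?_) (Real.exp_pos _).le
      have h1 : ‖u s‖ ^ b ≤ (1 / R) ^ b :=
        Real.rpow_le_rpow (norm_nonneg _) (hu_bd s hs0) hb0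
      have h2 : (1 / R) ^ b = 1 / R ^ b := by
        rw [Real.div_rpow zero_le_one hR.le, Real.one_rpow]
      calc c * ‖u s‖ ^ b ≤ c * (1 / R) ^ b :=
            mul_le_mul_of_nonneg_left h1 hc.le
        _ = c / R ^ b := by rw [h2]; ring
    have hg_cont : Continuous fun s : ℝ => Real.exp (-(a * (t - s))) * (c / R ^ b) := by
      continuity
    have hgint : IntervalIntegrable (fun s : ℝ => Real.exp (-(a * (t - s))) * (c / R ^ b))
        MeasureTheory.volume 0 t := hg_cont.intervalIntegrable _ _
    have hnorm := intervalIntegral.norm_integral_le_abs_of_norm_le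
      ((MeasureTheory.ae_restrict_iff' measurableSet_uIoc).mpr (MeasureTheory.ae_of_all _ hbound)) hgint
    -- compute the bounding integral
    have hcalc : ∫ s in (0:ℝ)..t, Real.exp (-(a * (t - s))) * (c / R ^ b)
        = ((1 - Real.exp (-(a * t))) / a) * (c / R ^ b) := by
      rw [intervalIntegral.integral_mul_const]
      congr 1
      have hderiv : ∀ s ∈ Set.uIcc (0:ℝ) t,
          HasDerivAt (fun s => a⁻¹ * Real.exp (-(a * (t - s))))
            (Real.exp (-(a * (t - s)))) s := by
        intro s _
        have : HasDerivAt (fun s : ℝ => -(a * (t - s))) a s := by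
          have := ((hasDerivAt_id s).const_sub t).const_mul a
          have h2 := this.neg
          exact h2.congr_deriv (by ring)
        have := (this.exp).const_mul a⁻¹
        exact this.congr_deriv (by field_simp)
      have hcont : IntervalIntegrable (fun s : ℝ => Real.exp (-(a * (t - s))))
          MeasureTheory.volume 0 t := by
        apply Continuous.intervalIntegrable; continuity
      rw [intervalIntegral.integral_eq_sub_of_hasDerivAt hderiv hcont]
      rw [sub_self, mul_zero, neg_zero, Real.exp_zero, sub_zero]
      field_simp
    have hle : ((1 - Real.exp (-(a * t))) / a) * (c / R ^ b) ≤ c / (a * R ^ b) := by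
      have he : (0:ℝ) < Real.exp (-(a * t)) := Real.exp_pos _
      have : (1 - Real.exp (-(a * t))) / a ≤ 1 / a := by
        gcongr
        linarith
      calc ((1 - Real.exp (-(a * t))) / a) * (c / R ^ b)
          ≤ (1 / a) * (c / R ^ b) := mul_le_mul_of_nonneg_right this hKnn
        _ = c / (a * R ^ b) := by field_simp
    have habs : |∫ s in (0:ℝ)..t, Real.exp (-(a * (t - s))) * (c / R ^ b)|
        = ∫ s in (0:ℝ)..t, Real.exp (-(a * (t - s))) * (c / R ^ b) := by
      rw [abs_of_nonneg]
      apply intervalIntegral.integral_nonneg ht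
      intro s _
      positivity
    have hI : ‖∫ s in (0:ℝ)..t, Real.exp (-(a * (t - s))) • h (u s)‖ ≤ c / (a * R ^ b) := by
      calc ‖∫ s in (0:ℝ)..t, Real.exp (-(a * (t - s))) • h (u s)‖
          ≤ |∫ s in (0:ℝ)..t, Real.exp (-(a * (t - s))) * (c / R ^ b)| := hnorm
        _ = ((1 - Real.exp (-(a * t))) / a) * (c / R ^ b) := by rw [habs, hcalc]
        _ ≤ c / (a * R ^ b) := hle
    calc ‖(∫ s in (0:ℝ)..t, Real.exp (-(a * (t - s))) • h (u s)) + f t‖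
        ≤ ‖∫ s in (0:ℝ)..t, Real.exp (-(a * (t - s))) • h (u s)‖ + ‖f t‖ := norm_add_le _ _
      _ ≤ c / (a * R ^ b) + c := add_le_add hI hft
      _ ≤ 1 / R := by
          rw [le_div_iff₀ hR]
          have heq : c / (a * R ^ b) + c = c * (1 + 1 / (a * R ^ b)) := by
            field_simp
            ring
          rw [heq]
          exact hsmall
  · rw [intervalIntegral.integral_undef hint, zero_add]
    exact hft.trans hcle
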